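/- For k ≥ 3, the group SL_k(Z/2) ⋉ (Z/2)^k (with the matrix multiplication action) is perfect, i.e., equal to its own commutator subgroup. -/

import Mathlib

/-- The action of `SL_k(ℤ/2)` on `(ℤ/2)^k` by matrix multiplication, as a
homomorphism into the automorphism group of the (multiplicatively written)
elementary abelian group `(ℤ/2)^k`. -/
def slAction (k : ℕ) :
    Matrix.SpecialLinearGroup (Fin k) (ZMod 2) →*
      MulAut (Multiplicative (Fin k → ZMod 2)) where
  toFun A :=
    { toFun := fun v => Multiplicative.ofAdd ((A : Matrix (Fin k) (Fin k) (ZMod 2)).mulVec v.toAdd)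
      invFun := fun v =>
        Multiplicative.ofAdd (((A⁻¹ : Matrix.SpecialLinearGroup (Fin k) (ZMod 2)) :
          Matrix (Fin k) (Fin k) (ZMod 2)).mulVec v.toAdd)
      left_inv := by
        intro v
        simp [Matrix.mulVec_mulVec, Matrix.adjugate_mul, Matrix.SpecialLinearGroup.det_coe]
      right_inv := by
        intro v
        simp [Matrix.mulVec_mulVec, Matrix.mul_adjugate, Matrix.SpecialLinearGroup.det_coe]
      map_mul' := by
        intro v w
        simp [Matrix.mulVec_add, ← ofAdd_add] }
  map_one' := by
    ext v
    simp
  map_mul' := by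
    intro A B
    ext v
    simp [Matrix.mulVec_mulVec]

open scoped commutatorElement

section Aux
open Matrix SemidirectProduct

variable {k : ℕ}

private lemma zmod2_cases : ∀ c : ZMod 2, c = 0 ∨ c = 1 := by decide

private def mkSL {k : ℕ} (M : Matrix (Fin k) (Fin k) (ZMod 2)) (h : M.det = 1) :
    Matrix.SpecialLinearGroup (Fin k) (ZMod 2) := ⟨M, h⟩

/-- A transvection with parameter 1 as an element of `SL_k(ℤ/2)`. -/
private def sltv (i j : Fin k) (h : i ≠ j) : Matrix.SpecialLinearGroup (Fin k) (ZMod 2) :=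
  ⟨Matrix.transvection i j 1, Matrix.det_transvection_of_ne i j h 1⟩

private lemma sltv_mul_self (i j : Fin k) (h : i ≠ j) : sltv i j h * sltv i j h = 1 := by
  apply Subtype.ext
  show Matrix.transvection i j (1:ZMod 2) * Matrix.transvection i j 1 = 1
  rw [Matrix.transvection_mul_transvection_same i j h, show (1:ZMod 2) + 1 = 0 by decide,
    Matrix.transvection_zero]

private lemma sltv_inv (i j : Fin k) (h : i ≠ j) : (sltv i j h)⁻¹ = sltv i j h :=
  inv_eq_of_mul_eq_one_right (sltv_mul_self i j h)

private lemma transvec_comm {i j l : Fin k} (hij : i ≠ j) (hil : i ≠ l) (hlj : l ≠ j) :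
    ⁅sltv i l hil, sltv l j hlj⁆ = sltv i j hij := by
  apply Subtype.ext
  rw [commutatorElement_def, sltv_inv, sltv_inv]
  show Matrix.transvection i l (1:ZMod 2) * Matrix.transvection l j 1 * Matrix.transvection i l 1 *
    Matrix.transvection l j 1 = Matrix.transvection i j 1
  simp only [Matrix.transvection, add_mul, mul_add, one_mul, mul_one,
    Matrix.single_mul_single_same, Matrix.single_mul_single_of_ne, hij, hil, hlj,
    Ne.symm hij, Ne.symm hil, Ne.symm hlj, ne_eq, not_false_iff]
  abel_nf
  simp [Matrix.smul_single, show (2:ZMod 2) = 0 by decide,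
    show (3:ZMod 2) = 1 by decide]

private lemma exists_third (hk : 3 ≤ k) (i j : Fin k) : ∃ l : Fin k, l ≠ i ∧ l ≠ j := by
  by_contra h
  push_neg at h
  have hsub : (Finset.univ : Finset (Fin k)) ⊆ {i, j} := by
    intro l _
    rcases eq_or_ne l i with rfl | hne
    · simp
    · simp [h l hne]
  have h1 := Finset.card_le_card hsub
  have h2 : ({i, j} : Finset (Fin k)).card ≤ 2 :=
    le_trans (Finset.card_insert_le _ _) (by simp)
  simp only [Finset.card_univ, Fintype.card_fin] at h1
  omega

private lemma transvection_mulVec_single {i j : Fin k} (hij : i ≠ j) :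
    (Matrix.transvection i j (1:ZMod 2)).mulVec (Pi.single j 1)
      = Pi.single j 1 + Pi.single i 1 := by
  funext a
  simp only [Matrix.transvection, Matrix.add_mulVec, Matrix.mulVec_single, Pi.add_apply]
  rcases eq_or_ne a i with rfl | hai <;> rcases eq_or_ne a j with rfl | haj <;>
    simp_all [Matrix.single, Matrix.one_apply, Pi.single_apply, eq_comm]

end Aux

/-- For `k ≥ 3`, the semidirect product `SL_k(ℤ/2) ⋉ (ℤ/2)^k`
(matrix multiplication action) is perfect: it equals its own commutator subgroup. -/
theorem stmt_5 (k : ℕ) (hk : 3 ≤ k) :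
    commutator ((Multiplicative (Fin k → ZMod 2)) ⋊[slAction k] Matrix.SpecialLinearGroup (Fin k) (ZMod 2)) = ⊤ := by
  classical
  set G := (Multiplicative (Fin k → ZMod 2)) ⋊[slAction k]
      Matrix.SpecialLinearGroup (Fin k) (ZMod 2) with hG
  rw [eq_top_iff]
  -- Step 1: images of transvections under `inr` lie in the commutator subgroup.
  have hinr_tv : ∀ (i j : Fin k) (h : i ≠ j),
      (SemidirectProduct.inr (sltv i j h) : G) ∈ commutator G := by
    intro i j h
    obtain ⟨l, hli, hlj⟩ := exists_third hk i j
    rw [← transvec_comm h (Ne.symm hli) hlj, map_commutatorElement, commutator_def]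
    exact Subgroup.commutator_mem_commutator (Subgroup.mem_top _) (Subgroup.mem_top _)
  -- Step 2: all of `inr` lies in the commutator subgroup (perfectness of SL).
  have hinr : ∀ A : Matrix.SpecialLinearGroup (Fin k) (ZMod 2),
      (SemidirectProduct.inr A : G) ∈ commutator G := by
    rintro ⟨M, hM⟩
    have key : ∀ h : M.det = 1, (SemidirectProduct.inr ⟨M, h⟩ : G) ∈ commutator G := by
      apply Matrix.diagonal_transvection_induction_of_det_ne_zero
        (fun N => ∀ h : N.det = 1, (SemidirectProduct.inr ⟨N, h⟩ : G) ∈ commutator G)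
        M (by rw [hM]; exact one_ne_zero)
      · intro D hD hdet
        have hD1 : D = fun _ => 1 := by
          funext i
          have hne : D i ≠ 0 := by
            intro h0
            apply hD
            rw [Matrix.det_diagonal]
            exact Finset.prod_eq_zero (Finset.mem_univ i) h0
          rcases zmod2_cases (D i) with h | h
          · exact absurd h hne
          · exact h
        have h1 : (⟨Matrix.diagonal D, hdet⟩ :
            Matrix.SpecialLinearGroup (Fin k) (ZMod 2))
            = (1 : Matrix.SpecialLinearGroup (Fin k) (ZMod 2)) :=
          Subtype.ext (by simp [hD1, Matrix.SpecialLinearGroup.coe_one, Matrix.diagonal_one])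
        rw [h1, map_one]
        exact one_mem _
      · intro t h
        rcases zmod2_cases t.c with hc | hc
        · have h1 : (⟨t.toMatrix, h⟩ : Matrix.SpecialLinearGroup (Fin k) (ZMod 2))
              = (1 : Matrix.SpecialLinearGroup (Fin k) (ZMod 2)) := by
            apply Subtype.ext
            rw [Matrix.SpecialLinearGroup.coe_one]
            show Matrix.transvection t.i t.j t.c = _
            rw [hc, Matrix.transvection_zero]
          rw [h1, map_one]
          exact one_mem _
        · have h1 : (⟨t.toMatrix, h⟩ : Matrix.SpecialLinearGroup (Fin k) (ZMod 2))
              = sltv t.i t.j t.hij := by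
            apply Subtype.ext
            show Matrix.transvection t.i t.j t.c = Matrix.transvection t.i t.j 1
            rw [hc]
          rw [h1]
          exact hinr_tv t.i t.j t.hij
      · intro A B hA hB PA PB h
        have hA1 : A.det = 1 := by
          rcases zmod2_cases A.det with h' | h'
          · exact absurd h' hA
          · exact h'
        have hB1 : B.det = 1 := by
          rcases zmod2_cases B.det with h' | h'
          · exact absurd h' hB
          · exact h'
        have h1 : (⟨A * B, h⟩ : Matrix.SpecialLinearGroup (Fin k) (ZMod 2))
            = mkSL A hA1 * mkSL B hB1 := by
          apply Subtype.ext
          rw [Matrix.SpecialLinearGroup.coe_mul]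
          rfl
        rw [h1, map_mul]
        exact mul_mem (PA hA1) (PB hB1)
    exact key hM
  -- Step 3: images of basis vectors under `inl` lie in the commutator subgroup.
  have hsingle : ∀ i : Fin k,
      (SemidirectProduct.inl (Multiplicative.ofAdd (Pi.single i 1)) : G) ∈ commutator G := by
    intro i
    obtain ⟨j, hji, -⟩ := exists_third hk i i
    have hij : i ≠ j := Ne.symm hji
    have hφ : (slAction k (sltv i j hij)) (Multiplicative.ofAdd (Pi.single j 1))
        = Multiplicative.ofAdd (Pi.single j 1 + Pi.single i 1) := by
      show Multiplicative.ofAdd ((Matrix.transvection i j (1 : ZMod 2)).mulVec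
        (Multiplicative.toAdd (Multiplicative.ofAdd (Pi.single j 1)))) = _
      rw [toAdd_ofAdd, transvection_mulVec_single hij]
    have hcomm : (⁅(SemidirectProduct.inr (sltv i j hij) : G),
        SemidirectProduct.inl (Multiplicative.ofAdd (Pi.single j 1))⁆ : G)
        = SemidirectProduct.inl (Multiplicative.ofAdd (Pi.single i 1)) := by
      rw [commutatorElement_def]
      have h2 : (SemidirectProduct.inr (sltv i j hij) : G)⁻¹
          = SemidirectProduct.inr ((sltv i j hij)⁻¹) := (map_inv _ _).symm
      have h3 : (SemidirectProduct.inl (Multiplicative.ofAdd (Pi.single j 1)) : G)⁻¹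
          = SemidirectProduct.inl ((Multiplicative.ofAdd (Pi.single j 1))⁻¹) :=
        (map_inv _ _).symm
      rw [h2, h3, ← SemidirectProduct.inl_aut, hφ, ← map_mul]
      congr 1
      rw [← ofAdd_neg, ← ofAdd_add]
      congr 1
      abel
    rw [← hcomm, commutator_def]
    exact Subgroup.commutator_mem_commutator (Subgroup.mem_top _) (Subgroup.mem_top _)
  -- Step 4: all of `inl` lies in the commutator subgroup.
  have hinl : ∀ v : Multiplicative (Fin k → ZMod 2),
      (SemidirectProduct.inl v : G) ∈ commutator G := by
    intro v
    have hv : v = ∏ i : Fin k, Multiplicative.ofAdd (Pi.single i (v.toAdd i)) := by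
      rw [← ofAdd_sum, Finset.univ_sum_single, ofAdd_toAdd]
    have hmem : v ∈ Subgroup.comap (SemidirectProduct.inl :
        Multiplicative (Fin k → ZMod 2) →* G) (commutator G) := by
      rw [hv]
      apply Subgroup.prod_mem
      intro i _
      rw [Subgroup.mem_comap]
      rcases zmod2_cases (v.toAdd i) with hc | hc
      · rw [hc]
        simpa using one_mem (commutator G)
      · rw [hc]
        exact hsingle i
    exact hmem
  -- Conclude.
  rintro x -
  rw [← SemidirectProduct.inl_left_mul_inr_right x]
  exact mul_mem (hinl x.left) (hinr x.right)
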